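/- Fix real numbers a < c < d. Then lim_{b→a+} ((√2+1)/π^{3/2})·(Γ(3/4)/Γ(1/4)) · (b−a)^{1/2}·(d−c)^{−1/2}·(d−a)^{−1/2}·(c−b)^{−1/2} · A(((b−a)(d−c))/((d−b)(c−a))) = (√2+1)/(π·(d−c)). -/

import Mathlib

/-- `A(χ) := ∫_χ^1 (1−ζ) ζ^{−3/4} (ζ−χ)^{−3/4} dζ`. -/
noncomputable def Aint (χ : ℝ) : ℝ :=
  ∫ ζ in χ..1, (1 - ζ) * ζ ^ (-(3/4) : ℝ) * (ζ - χ) ^ (-(3/4) : ℝ)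

open MeasureTheory Real Filter Set intervalIntegral


noncomputable def phi (u : ℝ) : ℝ := u ^ (-(1:ℝ)/2) * (1 - u) ^ (-(3/4) : ℝ)

lemma phi_coe (x : ℝ) (hx : 0 ≤ x) (hx1 : x ≤ 1) :
    ((phi x : ℝ) : ℂ) = (x:ℂ) ^ ((1/2:ℂ) - 1) * ((1:ℂ) - x) ^ ((1/4:ℂ) - 1) := by
  have h1 : ((1/2:ℂ) - 1) = ((-(1:ℝ)/2 : ℝ) : ℂ) := by push_cast; ring
  have h2 : ((1/4:ℂ) - 1) = ((-(3/4) : ℝ) : ℂ) := by push_cast; ring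
  rw [phi, h1, h2, Complex.ofReal_mul, Complex.ofReal_cpow hx, Complex.ofReal_cpow (by linarith)]
  push_cast
  ring_nf

lemma beta_val : ∫ u in (0:ℝ)..1, phi u
    = Real.Gamma (1/2) * Real.Gamma (1/4) / Real.Gamma (3/4) := by
  have hG := Complex.Gamma_mul_Gamma_eq_betaIntegral (s := 1/2) (t := 1/4)
    (by norm_num) (by norm_num)
  have hB : Complex.betaIntegral (1/2) (1/4) = ((∫ u in (0:ℝ)..1, phi u : ℝ) : ℂ) := by
    rw [Complex.betaIntegral, ← intervalIntegral.integral_ofReal]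
    refine intervalIntegral.integral_congr fun x hx => ?_
    rw [uIcc_of_le (by norm_num : (0:ℝ) ≤ 1)] at hx
    exact (phi_coe x hx.1 hx.2).symm
  rw [hB] at hG
  have h34 : (1/2 : ℂ) + 1/4 = ((3/4 : ℝ) : ℂ) := by norm_num
  rw [h34] at hG
  have h12 : (1/2 : ℂ) = ((1/2 : ℝ) : ℂ) := by norm_num
  have h14 : (1/4 : ℂ) = ((1/4 : ℝ) : ℂ) := by norm_num
  rw [h12, h14, Complex.Gamma_ofReal, Complex.Gamma_ofReal, Complex.Gamma_ofReal] at hG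
  have hG' : Real.Gamma (1/2) * Real.Gamma (1/4)
      = Real.Gamma (3/4) * ∫ u in (0:ℝ)..1, phi u := by
    exact_mod_cast hG
  have h34pos : 0 < Real.Gamma (3/4) := Real.Gamma_pos_of_pos (by norm_num)
  field_simp [hG']
  linear_combination -hG'

lemma phi_integrable : IntegrableOn phi (Ioc (0:ℝ) 1) := by
  have hc := Complex.betaIntegral_convergent (u := 1/2) (v := 1/4) (by norm_num) (by norm_num)
  have hc' : IntegrableOn (fun x : ℝ => (x:ℂ) ^ ((1/2:ℂ) - 1) * ((1:ℂ) - x) ^ ((1/4:ℂ) - 1))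
      (Ioc (0:ℝ) 1) := by
    rw [intervalIntegrable_iff_integrableOn_Ioc_of_le (by norm_num : (0:ℝ) ≤ 1)] at hc
    exact hc
  have h2 : IntegrableOn (fun x : ℝ =>
      ((x:ℂ) ^ ((1/2:ℂ) - 1) * ((1:ℂ) - x) ^ ((1/4:ℂ) - 1)).re) (Ioc (0:ℝ) 1) := hc'.re
  refine MeasureTheory.IntegrableOn.congr_fun h2 (fun x hx => ?_) measurableSet_Ioc
  rw [← phi_coe x hx.1.le hx.2, Complex.ofReal_re]

lemma phi_nonneg {u : ℝ} (hu : 0 ≤ u) (hu1 : u ≤ 1) : 0 ≤ phi u :=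
  mul_nonneg (Real.rpow_nonneg hu _) (Real.rpow_nonneg (by linarith) _)


noncomputable def gfun (χ : ℝ) : ℝ := ∫ u in Ioc χ 1, (1 - χ/u) * phi u

lemma image_lemma {χ : ℝ} (hχ : 0 < χ) :
    (fun u : ℝ => χ / u) '' Ioc χ 1 = Ico χ 1 := by
  ext y
  constructor
  · rintro ⟨u, ⟨hu1, hu2⟩, rfl⟩
    have hu0 : 0 < u := hχ.trans hu1
    constructor
    · calc χ = χ / 1 := by rw [div_one]
        _ ≤ χ / u := by apply div_le_div_of_nonneg_left hχ.le hu0 hu2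
    · rw [div_lt_one hu0]; exact hu1
  · rintro ⟨hy1, hy2⟩
    have hy0 : 0 < y := hχ.trans_le hy1
    refine ⟨χ / y, ⟨?_, ?_⟩, ?_⟩
    · rw [lt_div_iff₀ hy0]
      calc χ * y < χ * 1 := by nlinarith
        _ = χ := mul_one χ
    · rw [div_le_one hy0]; exact hy1
    · field_simp

lemma alg {χ u : ℝ} (hχ : 0 < χ) (hu1 : χ < u) (hu2 : u ≤ 1) :
    |χ * -((u:ℝ)^2)⁻¹| * ((1 - χ/u) * (χ/u) ^ (-(3/4):ℝ) * (χ/u - χ) ^ (-(3/4):ℝ))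
      = χ ^ (-(1:ℝ)/2) * ((1 - χ/u) * phi u) := by
  have hu0 : 0 < u := hχ.trans hu1
  have h1u : (0:ℝ) ≤ 1 - u := by linarith
  have habs : |χ * -((u:ℝ)^2)⁻¹| = χ * ((u:ℝ)^2)⁻¹ := by
    rw [mul_neg, abs_neg, abs_of_pos (by positivity)]
  have hsub : χ/u - χ = χ * (1-u) / u := by field_simp
  rw [habs, hsub, phi]
  rw [div_rpow hχ.le hu0.le, div_rpow (by positivity) hu0.le, mul_rpow hχ.le h1u]
  rw [show ((u:ℝ)^2)⁻¹ = u ^ ((-2):ℝ) by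
    rw [← Real.rpow_natCast u 2, ← Real.rpow_neg hu0.le]; norm_num]
  rw [div_eq_mul_inv (χ ^ (-(3/4):ℝ)), div_eq_mul_inv (χ ^ (-(3/4):ℝ) * _),
    ← Real.rpow_neg hu0.le]
  simp only [neg_neg]
  have ec : χ * (χ ^ (-(3/4):ℝ) * χ ^ (-(3/4):ℝ)) = χ ^ (-(1:ℝ)/2) := by
    rw [← Real.rpow_add hχ]
    nth_rewrite 1 [← Real.rpow_one χ]
    rw [← Real.rpow_add hχ]; norm_num
  have ed : u ^ ((-2):ℝ) * (u ^ ((3:ℝ)/4) * u ^ ((3:ℝ)/4)) = u ^ (-(1:ℝ)/2) := by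
    rw [← Real.rpow_add hu0, ← Real.rpow_add hu0]; norm_num
  linear_combination ((1 - χ/u) * (1-u) ^ (-(3/4):ℝ)
      * (u ^ ((-2):ℝ) * (u ^ ((3:ℝ)/4) * u ^ ((3:ℝ)/4)))) * ec
    + ((1 - χ/u) * (1-u) ^ (-(3/4):ℝ) * χ ^ (-(1:ℝ)/2)) * ed

lemma cov {χ : ℝ} (hχ : 0 < χ) (hχ1 : χ < 1) :
    χ ^ ((1:ℝ)/2) * Aint χ = gfun χ := by
  set f : ℝ → ℝ := fun ζ => (1 - ζ) * ζ ^ (-(3/4) : ℝ) * (ζ - χ) ^ (-(3/4) : ℝ) with hf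
  have h1 : Aint χ = ∫ ζ in Ioc χ 1, f ζ := intervalIntegral.integral_of_le hχ1.le
  have h2 : ∫ ζ in Ioc χ 1, f ζ = ∫ ζ in Ico χ 1, f ζ := by
    rw [MeasureTheory.integral_Ioc_eq_integral_Ioo, MeasureTheory.integral_Ico_eq_integral_Ioo]
  have hderiv : ∀ u ∈ Ioc χ 1, HasDerivWithinAt (fun u : ℝ => χ / u)
      (χ * -((u:ℝ)^2)⁻¹) (Ioc χ 1) u := by
    intro u hu
    have hu0 : (0:ℝ) < u := hχ.trans hu.1
    have := ((hasDerivAt_inv hu0.ne').const_mul χ).hasDerivWithinAt (s := Ioc χ 1)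
    simpa [div_eq_mul_inv] using this
  have hinj : InjOn (fun u : ℝ => χ / u) (Ioc χ 1) := by
    intro u hu v hv h
    have hu0 : (0:ℝ) < u := hχ.trans hu.1
    have hv0 : (0:ℝ) < v := hχ.trans hv.1
    have : χ * v = χ * u := by
      rw [div_eq_div_iff hu0.ne' hv0.ne'] at h; linarith
    exact (mul_left_cancel₀ hχ.ne' this).symm
  have h3 : ∫ ζ in Ico χ 1, f ζ = ∫ u in Ioc χ 1, |χ * -((u:ℝ)^2)⁻¹| • f (χ/u) := by
    rw [← image_lemma hχ]
    exact integral_image_eq_integral_abs_deriv_smul measurableSet_Ioc hderiv hinj f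
  have h4 : ∫ u in Ioc χ 1, |χ * -((u:ℝ)^2)⁻¹| • f (χ/u)
      = ∫ u in Ioc χ 1, χ ^ (-(1:ℝ)/2) * ((1 - χ/u) * phi u) := by
    refine setIntegral_congr_fun measurableSet_Ioc fun u hu => ?_
    rw [smul_eq_mul, hf]
    exact alg hχ hu.1 hu.2
  have h5 : ∫ u in Ioc χ 1, χ ^ (-(1:ℝ)/2) * ((1 - χ/u) * phi u)
      = χ ^ (-(1:ℝ)/2) * gfun χ := MeasureTheory.integral_const_mul _ _
  rw [h1, h2, h3, h4, h5, ← mul_assoc, ← Real.rpow_add hχ]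
  norm_num

lemma h_integrable {χ : ℝ} (hχ : 0 < χ) (hχ1 : χ < 1) :
    IntegrableOn (fun u : ℝ => (1 - χ/u) * phi u) (Ioc χ 1) := by
  refine Integrable.mono' (phi_integrable.mono_set (Ioc_subset_Ioc_left hχ.le)) ?_ ?_
  · apply Measurable.aestronglyMeasurable
    unfold phi; fun_prop
  · refine (ae_restrict_iff' measurableSet_Ioc).mpr (ae_of_all _ fun u hu => ?_)
    have hu0 : 0 < u := hχ.trans hu.1
    have h1 : 0 ≤ χ/u := by positivity
    have h2 : χ/u < 1 := (div_lt_one hu0).mpr hu.1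
    rw [norm_mul, norm_eq_abs, norm_eq_abs, abs_of_nonneg (phi_nonneg hu0.le hu.2)]
    nth_rewrite 2 [← one_mul (phi u)]
    apply mul_le_mul_of_nonneg_right _ (phi_nonneg hu0.le hu.2)
    rw [abs_le]; constructor <;> nlinarith

lemma upper_bd {χ : ℝ} (hχ : 0 < χ) (hχ1 : χ < 1) :
    gfun χ ≤ ∫ u in Ioc (0:ℝ) 1, phi u := by
  have h1 : gfun χ ≤ ∫ u in Ioc χ 1, phi u := by
    refine setIntegral_mono_on (h_integrable hχ hχ1)
      (phi_integrable.mono_set (Ioc_subset_Ioc_left hχ.le)) measurableSet_Ioc fun u hu => ?_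
    have hu0 : 0 < u := hχ.trans hu.1
    have h2 : χ/u < 1 := (div_lt_one hu0).mpr hu.1
    have h3 : 0 ≤ χ/u := by positivity
    nth_rewrite 2 [← one_mul (phi u)]
    apply mul_le_mul_of_nonneg_right (by linarith) (phi_nonneg hu0.le hu.2)
  refine h1.trans (setIntegral_mono_set phi_integrable ?_ ?_)
  · refine (ae_restrict_iff' measurableSet_Ioc).mpr (ae_of_all _ fun u hu => phi_nonneg hu.1.le hu.2)
  · exact HasSubset.Subset.eventuallyLE (Ioc_subset_Ioc_left hχ.le)

lemma tail_bd {δ : ℝ} (hδ : 0 < δ) (hδ2 : δ ≤ 1/2) :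
    ∫ u in Ioc (0:ℝ) δ, phi u ≤ 4 * δ ^ ((1:ℝ)/2) := by
  have hint2 : IntegrableOn (fun u : ℝ => 2 * u ^ (-(1:ℝ)/2)) (Ioc 0 δ) := by
    have := (intervalIntegrable_rpow' (a := 0) (b := δ) (r := -(1:ℝ)/2) (by norm_num))
    rw [intervalIntegrable_iff_integrableOn_Ioc_of_le hδ.le] at this
    exact this.const_mul 2
  have h1 : ∫ u in Ioc (0:ℝ) δ, phi u ≤ ∫ u in Ioc (0:ℝ) δ, 2 * u ^ (-(1:ℝ)/2) := by
    refine setIntegral_mono_on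
      (phi_integrable.mono_set (Ioc_subset_Ioc_right (by linarith))) hint2
      measurableSet_Ioc fun u hu => ?_
    have h3 : (1 - u) ^ (-(3/4) : ℝ) ≤ 2 := by
      have e1 : (1 - u) ^ (-(3/4) : ℝ) ≤ (1/2 : ℝ) ^ (-(3/4) : ℝ) :=
        Real.rpow_le_rpow_of_nonpos (by norm_num) (by linarith [hu.2]) (by norm_num)
      have e2 : (1/2 : ℝ) ^ (-(3/4) : ℝ) = (2:ℝ) ^ ((3/4) : ℝ) := by
        rw [one_div, ← Real.rpow_neg_one (2:ℝ), ← Real.rpow_mul (by norm_num)]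
        norm_num
      have e3 : (2:ℝ) ^ ((3/4) : ℝ) ≤ (2:ℝ) ^ ((1:ℝ)) :=
        Real.rpow_le_rpow_of_exponent_le one_le_two (by norm_num)
      rw [Real.rpow_one] at e3
      linarith
    rw [phi, mul_comm (2:ℝ)]
    exact mul_le_mul_of_nonneg_left h3 (Real.rpow_nonneg hu.1.le _)
  have h2 : ∫ u in Ioc (0:ℝ) δ, 2 * u ^ (-(1:ℝ)/2) = 4 * δ ^ ((1:ℝ)/2) := by
    rw [← intervalIntegral.integral_of_le hδ.le, intervalIntegral.integral_const_mul,
      integral_rpow (Or.inl (by norm_num))]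
    rw [Real.zero_rpow (by norm_num)]
    norm_num
    ring
  linarith

lemma lower_bd {χ : ℝ} (hχ : 0 < χ) (hχ1 : χ ≤ 1/4) :
    (1 - χ ^ ((1:ℝ)/2)) * ((∫ u in Ioc (0:ℝ) 1, phi u) - 4 * χ ^ ((1:ℝ)/4)) ≤ gfun χ := by
  set δ : ℝ := χ ^ ((1:ℝ)/2) with hδdef
  have hχ1' : χ < 1 := by linarith
  have hδ0 : 0 < δ := Real.rpow_pos_of_pos hχ _
  have hδhalf : δ ≤ 1/2 := by
    have : δ ≤ (1/4 : ℝ) ^ ((1:ℝ)/2) := Real.rpow_le_rpow hχ.le hχ1 (by norm_num)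
    have h4 : ((1/4:ℝ)) ^ ((1/2):ℝ) = 1/2 := by
      rw [show (1/4:ℝ) = (1/2)^(2:ℕ) by norm_num, ← Real.rpow_natCast (1/2:ℝ) 2,
        ← Real.rpow_mul (by norm_num)]
      norm_num
    rw [show ((1:ℝ)/2) = ((1/2):ℝ) by norm_num] at this
    linarith [this.trans_eq h4]
  have hχδ : χ ≤ δ := by
    nth_rewrite 1 [← Real.rpow_one χ]
    exact Real.rpow_le_rpow_of_exponent_ge hχ hχ1'.le (by norm_num)
  have hδ1 : δ < 1 := by linarith
  -- χ / δ = δ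
  have hδδ : δ * δ = χ := by
    rw [hδdef, ← Real.rpow_add hχ]; norm_num
  have hchidel : χ / δ = δ := by
    rw [← hδδ]; exact mul_div_cancel_right₀ δ hδ0.ne'
  -- δ ^ (1/2) = χ ^ (1/4)
  have hδq : δ ^ ((1:ℝ)/2) = χ ^ ((1:ℝ)/4) := by
    rw [hδdef, ← Real.rpow_mul hχ.le]
    norm_num
  -- split the beta integral
  have hsplit : (∫ u in Ioc (0:ℝ) 1, phi u)
      = (∫ u in Ioc (0:ℝ) δ, phi u) + ∫ u in Ioc δ 1, phi u := by
    rw [← Set.Ioc_union_Ioc_eq_Ioc hδ0.le hδ1.le,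
      setIntegral_union (Set.Ioc_disjoint_Ioc_of_le le_rfl) measurableSet_Ioc
        (phi_integrable.mono_set (Ioc_subset_Ioc_right (by linarith)))
        (phi_integrable.mono_set (Ioc_subset_Ioc_left hδ0.le))]
  have h1 : (∫ u in Ioc (0:ℝ) 1, phi u) - 4 * χ ^ ((1:ℝ)/4) ≤ ∫ u in Ioc δ 1, phi u := by
    have := tail_bd hδ0 hδhalf
    rw [hδq] at this
    linarith [hsplit]
  have h2 : (1 - δ) * ((∫ u in Ioc (0:ℝ) 1, phi u) - 4 * χ ^ ((1:ℝ)/4))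
      ≤ (1 - δ) * ∫ u in Ioc δ 1, phi u :=
    mul_le_mul_of_nonneg_left h1 (by linarith)
  have h3 : (1 - δ) * (∫ u in Ioc δ 1, phi u) ≤ ∫ u in Ioc δ 1, (1 - χ/u) * phi u := by
    rw [← MeasureTheory.integral_const_mul]
    refine setIntegral_mono_on
      ((phi_integrable.mono_set (Ioc_subset_Ioc_left hδ0.le)).const_mul _)
      ((h_integrable hχ hχ1').mono_set (Ioc_subset_Ioc_left hχδ))
      measurableSet_Ioc fun u hu => ?_
    have hu0 : 0 < u := hδ0.trans hu.1
    have hbd : χ/u ≤ δ := by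
      rw [← hchidel]
      exact div_le_div_of_nonneg_left hχ.le hδ0 hu.1.le
    exact mul_le_mul_of_nonneg_right (by linarith) (phi_nonneg hu0.le hu.2)
  have h4 : (∫ u in Ioc δ 1, (1 - χ/u) * phi u) ≤ gfun χ := by
    refine setIntegral_mono_set (h_integrable hχ hχ1') ?_
      (HasSubset.Subset.eventuallyLE (Ioc_subset_Ioc_left hχδ))
    refine (ae_restrict_iff' measurableSet_Ioc).mpr (ae_of_all _ fun u hu => ?_)
    have hu0 : 0 < u := hχ.trans hu.1
    have : χ/u < 1 := (div_lt_one hu0).mpr hu.1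
    exact mul_nonneg (by linarith) (phi_nonneg hu0.le hu.2)
  linarith

lemma rpow_tendsto (q : ℝ) (hq : 0 < q) :
    Tendsto (fun χ : ℝ => χ ^ q) (nhdsWithin 0 (Ioi 0)) (nhds 0) := by
  have h := (Real.continuousAt_rpow_const 0 q (Or.inr hq.le)).tendsto
  rw [Real.zero_rpow hq.ne'] at h
  exact h.mono_left nhdsWithin_le_nhds

lemma key : Tendsto (fun χ : ℝ => χ ^ ((1:ℝ)/2) * Aint χ) (nhdsWithin 0 (Ioi 0))
    (nhds (∫ u in Ioc (0:ℝ) 1, phi u)) := by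
  set I : ℝ := ∫ u in Ioc (0:ℝ) 1, phi u with hI
  have hmem : Ioc (0:ℝ) (1/4) ∈ nhdsWithin (0:ℝ) (Ioi 0) :=
    Ioc_mem_nhdsGT_of_mem ⟨le_refl 0, by norm_num⟩
  refine tendsto_of_tendsto_of_tendsto_of_le_of_le'
    (g := fun χ : ℝ => (1 - χ ^ ((1:ℝ)/2)) * (I - 4 * χ ^ ((1:ℝ)/4)))
    (h := fun _ : ℝ => I) ?_ tendsto_const_nhds ?_ ?_
  · have h1 := rpow_tendsto ((1:ℝ)/2) (by norm_num)
    have h2 := rpow_tendsto ((1:ℝ)/4) (by norm_num)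
    have hmain : Tendsto (fun χ : ℝ => (1 - χ ^ ((1:ℝ)/2)) * (I - 4 * χ ^ ((1:ℝ)/4)))
        (nhdsWithin 0 (Ioi 0)) (nhds ((1 - 0) * (I - 4 * 0))) :=
      (tendsto_const_nhds.sub h1).mul (tendsto_const_nhds.sub (h2.const_mul 4))
    simpa using hmain
  · filter_upwards [hmem] with χ hχ
    rw [cov hχ.1 (by linarith [hχ.2])]
    exact lower_bd hχ.1 hχ.2
  · filter_upwards [hmem] with χ hχ
    rw [cov hχ.1 (by linarith [hχ.2])]
    exact upper_bd hχ.1 (by linarith [hχ.2])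

/-- Fix real numbers a < c < d. Then
lim_{b→a+} ((√2+1)/π^{3/2})·(Γ(3/4)/Γ(1/4)) · (b−a)^{1/2}·(d−c)^{−1/2}·(d−a)^{−1/2}·(c−b)^{−1/2}
  · A(((b−a)(d−c))/((d−b)(c−a))) = (√2+1)/(π·(d−c)). -/
theorem stmt12 (a c d : ℝ) (hac : a < c) (hcd : c < d) :
    Filter.Tendsto
      (fun b : ℝ => (Real.sqrt 2 + 1) / Real.pi ^ ((3 : ℝ)/2) *
        (Real.Gamma (3/4) / Real.Gamma (1/4)) *
        ((b - a) ^ ((1/2) : ℝ) * (d - c) ^ (-(1/2) : ℝ) * (d - a) ^ (-(1/2) : ℝ) *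
          (c - b) ^ (-(1/2) : ℝ)) *
        Aint (((b - a) * (d - c)) / ((d - b) * (c - a))))
      (nhdsWithin a (Set.Ioi a))
      (nhds ((Real.sqrt 2 + 1) / (Real.pi * (d - c)))) := by
  have hca : (0:ℝ) < c - a := by linarith
  have hdc : (0:ℝ) < d - c := by linarith
  have hda : (0:ℝ) < d - a := by linarith
  set C0 : ℝ := (Real.sqrt 2 + 1) / Real.pi ^ ((3 : ℝ)/2) *
    (Real.Gamma (3/4) / Real.Gamma (1/4)) with hC0
  set χf : ℝ → ℝ := fun b => ((b - a) * (d - c)) / ((d - b) * (c - a)) with hχf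
  set I : ℝ := ∫ u in Ioc (0:ℝ) 1, phi u with hIdef
  -- χf tends to 0 within Ioi 0
  have hχc : Tendsto χf (nhds a) (nhds 0) := by
    have hcont : ContinuousAt χf a := by
      apply ContinuousAt.div (by fun_prop) (by fun_prop)
      positivity
    have hval : χf a = 0 := by simp [hχf]
    simpa [hval] using hcont.tendsto
  have hχ : Tendsto χf (nhdsWithin a (Ioi a)) (nhdsWithin 0 (Ioi 0)) := by
    apply tendsto_nhdsWithin_of_tendsto_nhds_of_eventually_within _
      (hχc.mono_left nhdsWithin_le_nhds)
    filter_upwards [Ioo_mem_nhdsGT hac] with b hb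
    have hba : (0:ℝ) < b - a := by linarith [hb.1]
    have hdb : (0:ℝ) < d - b := by linarith [hb.2]
    have hcb : (0:ℝ) < c - b := by linarith [hb.2]
    exact div_pos (mul_pos hba hdc) (mul_pos hdb hca)
  have hG : Tendsto (fun b => (χf b) ^ ((1:ℝ)/2) * Aint (χf b))
      (nhdsWithin a (Ioi a)) (nhds I) := key.comp hχ
  -- ratio tends to 1
  have hR : Tendsto (fun b => ((d - b) * (c - a) / ((d - a) * (c - b))) ^ ((1:ℝ)/2))
      (nhdsWithin a (Ioi a)) (nhds 1) := by
    have hcont : ContinuousAt (fun b : ℝ => (d - b) * (c - a) / ((d - a) * (c - b))) a := by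
      apply ContinuousAt.div (by fun_prop) (by fun_prop)
      positivity
    have hval : (d - a) * (c - a) / ((d - a) * (c - a)) = 1 := by
      field_simp
    have h2 := (hcont.rpow_const (Or.inr (by norm_num : (0:ℝ) ≤ 1/2))).tendsto
    rw [hval, Real.one_rpow] at h2
    exact h2.mono_left nhdsWithin_le_nhds
  -- the combined limit
  have hmain : Tendsto (fun b => C0 * (d - c)⁻¹ *
      ((d - b) * (c - a) / ((d - a) * (c - b))) ^ ((1:ℝ)/2) *
      ((χf b) ^ ((1:ℝ)/2) * Aint (χf b)))
      (nhdsWithin a (Ioi a)) (nhds (C0 * (d - c)⁻¹ * 1 * I)) :=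
    (tendsto_const_nhds.mul hR).mul hG
  -- identify the limit value
  have hIval : I = Real.sqrt Real.pi * Real.Gamma (1/4) / Real.Gamma (3/4) := by
    rw [hIdef, ← intervalIntegral.integral_of_le (by norm_num : (0:ℝ) ≤ 1), beta_val,
      Real.Gamma_one_half_eq]
  have hπ : Real.pi ^ ((3:ℝ)/2) = Real.pi * Real.sqrt Real.pi := by
    rw [show (3:ℝ)/2 = 1 + 1/2 by norm_num, Real.rpow_add Real.pi_pos, Real.rpow_one,
      ← Real.sqrt_eq_rpow]
  have hlim : C0 * (d - c)⁻¹ * 1 * I = (Real.sqrt 2 + 1) / (Real.pi * (d - c)) := by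
    rw [hIval, hC0, hπ]
    have h1 : Real.Gamma (3/4) ≠ 0 := (Real.Gamma_pos_of_pos (by norm_num)).ne'
    have h2 : Real.Gamma (1/4) ≠ 0 := (Real.Gamma_pos_of_pos (by norm_num)).ne'
    have h3 : Real.sqrt Real.pi ≠ 0 := (Real.sqrt_pos.mpr Real.pi_pos).ne'
    have h4 : Real.pi ≠ 0 := Real.pi_pos.ne'
    field_simp
  rw [← hlim]
  refine Filter.Tendsto.congr' ?_ hmain
  filter_upwards [Ioo_mem_nhdsGT hac] with b hb
  have hba : (0:ℝ) < b - a := by linarith [hb.1]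
  have hdb : (0:ℝ) < d - b := by linarith [hb.2]
  have hcb : (0:ℝ) < c - b := by linarith [hb.2]
  have hp : (b - a) ^ ((1/2) : ℝ) * (d - c) ^ (-(1/2) : ℝ) * (d - a) ^ (-(1/2) : ℝ) *
      (c - b) ^ (-(1/2) : ℝ)
      = (d - c)⁻¹ * ((d - b) * (c - a) / ((d - a) * (c - b))) ^ ((1:ℝ)/2) *
        ((b - a) * (d - c) / ((d - b) * (c - a))) ^ ((1:ℝ)/2) := by
    rw [Real.div_rpow (by positivity) (by positivity),
      Real.div_rpow (by positivity) (by positivity),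
      Real.mul_rpow hdb.le hca.le, Real.mul_rpow hba.le hdc.le, Real.mul_rpow hda.le hcb.le,
      Real.rpow_neg hdc.le, Real.rpow_neg hda.le, Real.rpow_neg hcb.le]
    have hsq : (d-c) ^ ((1/2):ℝ) * (d-c) ^ ((1/2):ℝ) = d - c := by
      rw [← Real.rpow_add hdc]; norm_num
    have n1 : (d-c) ^ ((1/2):ℝ) ≠ 0 := (Real.rpow_pos_of_pos hdc _).ne'
    have n2 : (d-a) ^ ((1/2):ℝ) ≠ 0 := (Real.rpow_pos_of_pos hda _).ne'
    have n3 : (c-b) ^ ((1/2):ℝ) ≠ 0 := (Real.rpow_pos_of_pos hcb _).ne'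
    have n4 : (d-b) ^ ((1/2):ℝ) ≠ 0 := (Real.rpow_pos_of_pos hdb _).ne'
    have n5 : (c-a) ^ ((1/2):ℝ) ≠ 0 := (Real.rpow_pos_of_pos hca _).ne'
    field_simp
    linear_combination (-1 : ℝ) * hsq
  simp only [hχf]
  rw [hp]
  ring
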